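/- Let Â = A + εB and Ĉ = C + εD be dual matrices of index 1 whose dual group inverses exist and are given by Â^# = A^# − ε A^# B A^# and Ĉ^# = C^# − ε C^# D C^#. If AC = CA, C^# B = B C^#, and A^# D = D A^#, then (ÂĈ)^# = Â^# Ĉ^# = Ĉ^# Â^#. -/

import Mathlib

open Matrix Finset

noncomputable section

/-- The dual matrix `A + εB` as a matrix over the dual numbers `ℝ[ε]/(ε²)`. -/
def dmat {m : Type*} (A B : Matrix m m ℝ) : Matrix m m (DualNumber ℝ) :=
  Matrix.of fun i j => TrivSqZeroExt.inl (A i j) + TrivSqZeroExt.inr (B i j)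

/-- `x` is a Drazin inverse of `a` with index parameter `k`
(for `k = 1` this is the group inverse). -/
def IsDrazin {R : Type*} [Monoid R] (k : ℕ) (a x : R) : Prop :=
  a ^ k * x * a = a ^ k ∧ x * a * x = x ∧ a * x = x * a

/-- `A` has index `k`: `k` is the smallest nonnegative integer with
`rank (A^k) = rank (A^(k+1))`. -/
def hasIndex {m : Type*} [Fintype m] [DecidableEq m] (A : Matrix m m ℝ) (k : ℕ) : Prop :=
  (A ^ (k + 1)).rank = (A ^ k).rank ∧ ∀ j < k, (A ^ (j + 1)).rank ≠ (A ^ j).rank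

/-- `D = A^{k-1} B + A^{k-2} B A + ⋯ + B A^{k-1}`. -/
def dsum {m : Type*} [Fintype m] [DecidableEq m] (A B : Matrix m m ℝ) (k : ℕ) :
    Matrix m m ℝ :=
  ∑ i ∈ Finset.range k, A ^ i * B * A ^ (k - 1 - i)

section DmatLemmas

lemma dmat_fst {m : Type*} (A B : Matrix m m ℝ) (i j : m) : (dmat A B i j).fst = A i j := by
  simp [dmat]

lemma dmat_snd {m : Type*} (A B : Matrix m m ℝ) (i j : m) : (dmat A B i j).snd = B i j := by
  simp [dmat]

lemma dmat_mul {m : Type*} [Fintype m] (A B C D : Matrix m m ℝ) :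
    dmat A B * dmat C D = dmat (A*C) (A*D + B*C) := by
  ext i j
  · simp [dmat, Matrix.mul_apply, TrivSqZeroExt.fst_sum]
  · simp [dmat, Matrix.mul_apply, TrivSqZeroExt.snd_sum, TrivSqZeroExt.snd_mul,
      Finset.sum_add_distrib, mul_comm]

lemma dmat_eq_iff {m : Type*} (A B C D : Matrix m m ℝ) :
    dmat A B = dmat C D ↔ A = C ∧ B = D := by
  constructor
  · intro h
    constructor <;> ext i j
    · have := congrArg (fun M => (M i j).fst) h; simpa [dmat_fst] using this
    · have := congrArg (fun M => (M i j).snd) h; simpa [dmat_snd] using this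
  · rintro ⟨rfl, rfl⟩; rfl

lemma dmat_decomp {m : Type*} (Z : Matrix m m (DualNumber ℝ)) :
    Z = dmat (Matrix.of fun i j => (Z i j).fst) (Matrix.of fun i j => (Z i j).snd) := by
  ext i j <;> simp [dmat]

end DmatLemmas

section RingLemmas

variable {R : Type*} [Ring R]

lemma gi_comm (a g x : R) (k1 : a*g*a = a) (k2 : g*a*g = g) (k3 : a*g = g*a)
    (hx : x*a = a*x) : x*g = g*x := by
  have k1' : a*(g*a) = a := by rw [← mul_assoc, k1]
  have k2' : g*(a*g) = g := by rw [← mul_assoc, k2]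
  have he : x*(a*g) = (a*g)*(x*(a*g)) := by
    calc x*(a*g) = (x*a)*g := by noncomm_ring
      _ = (a*x)*g := by rw [hx]
      _ = ((a*g*a)*x)*g := by rw [k1]
      _ = (a*g)*((a*x)*g) := by noncomm_ring
      _ = (a*g)*((x*a)*g) := by rw [hx]
      _ = (a*g)*(x*(a*g)) := by noncomm_ring
  have he2 : (a*g)*x = (a*g)*(x*(a*g)) := by
    calc (a*g)*x = (g*a)*x := by rw [k3]
      _ = g*(a*x) := by noncomm_ring
      _ = g*(x*a) := by rw [hx]
      _ = g*(x*(a*(g*a))) := by rw [k1']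
      _ = g*((x*a)*(g*a)) := by noncomm_ring
      _ = g*((a*x)*(g*a)) := by rw [hx]
      _ = (g*a)*(x*(g*a)) := by noncomm_ring
      _ = (a*g)*(x*(g*a)) := by rw [k3]
      _ = (a*g)*(x*(a*g)) := by rw [k3]
  have hce : x*(a*g) = (a*g)*x := by rw [he, ← he2]
  symm
  calc g*x = (g*(a*g))*x := by rw [k2']
    _ = g*((a*g)*x) := by noncomm_ring
    _ = g*(x*(a*g)) := by rw [← hce]
    _ = g*((x*a)*g) := by noncomm_ring
    _ = g*((a*x)*g) := by rw [hx]
    _ = ((g*a)*x)*g := by noncomm_ring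
    _ = ((a*g)*x)*g := by rw [k3]
    _ = (x*(a*g))*g := by rw [← hce]
    _ = x*((a*g)*g) := by noncomm_ring
    _ = x*((g*a)*g) := by rw [k3]
    _ = x*g := by rw [k2]

lemma gi_unique (a x y : R) (hx1 : a*x*a = a) (hx2 : x*a*x = x) (hx3 : a*x = x*a)
    (hy1 : a*y*a = a) (hy2 : y*a*y = y) (hy3 : a*y = y*a) : x = y := by
  have hef : a*x = a*y := by
    have e1 : (a*x)*(a*y) = a*y := by
      calc (a*x)*(a*y) = (a*x*a)*y := by noncomm_ring
        _ = a*y := by rw [hx1]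
    have e2 : (a*x)*(a*y) = a*x := by
      calc (a*x)*(a*y) = (x*a)*(y*a) := by rw [← hx3, ← hy3]
        _ = x*(a*y*a) := by noncomm_ring
        _ = x*a := by rw [hy1]
        _ = a*x := hx3.symm
    rw [← e1, e2]
  calc x = x*a*x := hx2.symm
    _ = x*(a*x) := by noncomm_ring
    _ = x*(a*y) := by rw [hef]
    _ = (x*a)*y := by noncomm_ring
    _ = (a*y)*y := by rw [← hx3, hef]
    _ = (y*a)*y := by rw [hy3]
    _ = y := hy2

end RingLemmas

theorem dggi_reverse_forward_order {n : ℕ} (A B C D Ag Cg : Matrix (Fin n) (Fin n) ℝ)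
    (hAg : IsDrazin 1 A Ag) (hCg : IsDrazin 1 C Cg)
    (hAh : IsDrazin 1 (dmat A B) (dmat Ag (-(Ag * B * Ag))))
    (hCh : IsDrazin 1 (dmat C D) (dmat Cg (-(Cg * D * Cg))))
    (hex : ∃ Z : Matrix (Fin n) (Fin n) (DualNumber ℝ),
      IsDrazin 1 (dmat A B * dmat C D) Z)
    (h1 : A * C = C * A) (h2 : Cg * B = B * Cg) (h3 : Ag * D = D * Ag) :
    IsDrazin 1 (dmat A B * dmat C D)
      (dmat Ag (-(Ag * B * Ag)) * dmat Cg (-(Cg * D * Cg))) ∧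
    dmat Ag (-(Ag * B * Ag)) * dmat Cg (-(Cg * D * Cg)) =
      dmat Cg (-(Cg * D * Cg)) * dmat Ag (-(Ag * B * Ag)) := by
    classical
  -- basic extraction
  obtain ⟨ha1, ha2, ha3⟩ := hAg
  rw [pow_one] at ha1
  obtain ⟨hc1, hc2, hc3⟩ := hCg
  rw [pow_one] at hc1
  -- assoc'd forms
  have ha1' : A*(Ag*A) = A := by rw [← mul_assoc, ha1]
  have ha2' : Ag*(A*Ag) = Ag := by rw [← mul_assoc, ha2]
  have hc1' : C*(Cg*C) = C := by rw [← mul_assoc, hc1]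
  have hc2' : Cg*(C*Cg) = Cg := by rw [← mul_assoc, hc2]
  -- commutations via gi_comm
  have hacg : A*Cg = Cg*A := gi_comm C Cg A hc1 hc2 hc3 h1
  have hagc : C*Ag = Ag*C := gi_comm A Ag C ha1 ha2 ha3 h1.symm
  have haggc : Ag*Cg = Cg*Ag := gi_comm C Cg Ag hc1 hc2 hc3 hagc.symm
  -- swap rules (move A, Ag left)
  have r1 : ∀ t, C*(A*t) = A*(C*t) := fun t => by rw [← mul_assoc, ← h1, mul_assoc]
  have r2 : ∀ t, Cg*(A*t) = A*(Cg*t) := fun t => by rw [← mul_assoc, ← hacg, mul_assoc]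
  have r3 : ∀ t, C*(Ag*t) = Ag*(C*t) := fun t => by rw [← mul_assoc, hagc, mul_assoc]
  have r4 : ∀ t, Cg*(Ag*t) = Ag*(Cg*t) := fun t => by rw [← mul_assoc, ← haggc, mul_assoc]
  have r5 : ∀ t, Cg*(B*t) = B*(Cg*t) := fun t => by rw [← mul_assoc, h2, mul_assoc]
  have r6 : ∀ t, D*(Ag*t) = Ag*(D*t) := fun t => by rw [← mul_assoc, ← h3, mul_assoc]
  have r7 : ∀ t, Ag*(A*t) = A*(Ag*t) := fun t => by rw [← mul_assoc, ← ha3, mul_assoc]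
  have r8 : ∀ t, Cg*(C*t) = C*(Cg*t) := fun t => by rw [← mul_assoc, ← hc3, mul_assoc]
  -- absorb bases
  have b13 : A*(A*Ag) = A := by rw [ha3, ha1']
  have b14 : A*(Ag*Ag) = Ag := by rw [← mul_assoc, ha3, mul_assoc, ha2']
  have b15 : C*(C*Cg) = C := by rw [hc3, hc1']
  have b16 : C*(Cg*Cg) = Cg := by rw [← mul_assoc, hc3, mul_assoc, hc2']
  have b17 : Ag*(Ag*A) = Ag := by rw [← ha3, ha2']
  have b18 : Cg*(Cg*C) = Cg := by rw [← hc3, hc2']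
  -- trailing absorb rules
  have mkt : ∀ (L w : Matrix (Fin n) (Fin n) ℝ), L = w →
      ∀ t, L*t = w*t := fun L w h t => by rw [h]
  have r9 : ∀ t, A*(Ag*(A*t)) = A*t := fun t => by
    have := mkt _ _ ha1' t; simpa only [mul_assoc] using this
  have r10 : ∀ t, Ag*(A*(Ag*t)) = Ag*t := fun t => by
    have := mkt _ _ ha2' t; simpa only [mul_assoc] using this
  have r11 : ∀ t, C*(Cg*(C*t)) = C*t := fun t => by
    have := mkt _ _ hc1' t; simpa only [mul_assoc] using this
  have r12 : ∀ t, Cg*(C*(Cg*t)) = Cg*t := fun t => by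
    have := mkt _ _ hc2' t; simpa only [mul_assoc] using this
  have r13 : ∀ t, A*(A*(Ag*t)) = A*t := fun t => by
    have := mkt _ _ b13 t; simpa only [mul_assoc] using this
  have r14 : ∀ t, A*(Ag*(Ag*t)) = Ag*t := fun t => by
    have := mkt _ _ b14 t; simpa only [mul_assoc] using this
  have r15 : ∀ t, C*(C*(Cg*t)) = C*t := fun t => by
    have := mkt _ _ b15 t; simpa only [mul_assoc] using this
  have r16 : ∀ t, C*(Cg*(Cg*t)) = Cg*t := fun t => by
    have := mkt _ _ b16 t; simpa only [mul_assoc] using this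
  have r17' : ∀ t, Ag*(Ag*(A*t)) = Ag*t := fun t => by
    have := mkt _ _ b17 t; simpa only [mul_assoc] using this
  have r18' : ∀ t, Cg*(Cg*(C*t)) = Cg*t := fun t => by
    have := mkt _ _ b18 t; simpa only [mul_assoc] using this
  -- dual-part equations from hAh, hCh (the commutation component)
  have e2 : A * -(Ag*B*Ag) + B*Ag = Ag*B + -(Ag*B*Ag)*A := by
    have h := hAh.2.2
    rw [dmat_mul, dmat_mul, dmat_eq_iff] at h
    exact h.2
  have f2 : C * -(Cg*D*Cg) + D*Cg = Cg*D + -(Cg*D*Cg)*C := by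
    have h := hCh.2.2
    rw [dmat_mul, dmat_mul, dmat_eq_iff] at h
    exact h.2
  -- ed1 : Ag*B = Ag*(B*(A*Ag))
  have ed1b : Ag*(B*(A*Ag)) = Ag*B := by
    have t1 := congrArg (fun z => Ag * z) e2
    simp only [mul_add, mul_neg, neg_mul, mul_assoc, r10] at t1
    -- t1 : -(Ag*(B*Ag)) + Ag*(B*Ag) = Ag*(Ag*B) + -(Ag*(Ag*(B*(Ag*A))))
    rw [neg_add_cancel] at t1
    have t2 : Ag*(Ag*B) = Ag*(Ag*(B*(Ag*A))) := by
      have := add_neg_eq_zero.mp t1.symm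
      exact this
    have t3 := congrArg (fun z => A * z) t2
    simp only [r14] at t3
    rw [← ha3] at t3
    exact t3.symm
  have r19' : ∀ t, Ag*(B*(A*(Ag*t))) = Ag*(B*t) := fun t => by
    have := mkt _ _ ed1b t; simpa only [mul_assoc] using this
  -- ed2 : B*Ag = A*(Ag*(B*Ag))
  have ed2b : A*(Ag*(B*Ag)) = B*Ag := by
    have t1 := congrArg (fun z => z * Ag) e2
    simp only [add_mul, neg_mul, mul_neg, mul_assoc, ha2'] at t1
    -- t1 : -(A*(Ag*(B*(Ag*Ag)))) + B*(Ag*Ag) = Ag*(B*Ag) + -(Ag*(B*Ag))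
    rw [add_neg_cancel] at t1
    have t2 : B*(Ag*Ag) = A*(Ag*(B*(Ag*Ag))) := by
      have := neg_add_eq_zero.mp t1
      exact this.symm
    have t3 := congrArg (fun z => z * A) t2
    simp only [mul_assoc] at t3
    rw [b17] at t3
    exact t3.symm
  have r20' : ∀ t, A*(Ag*(B*(Ag*t))) = B*(Ag*t) := fun t => by
    have := mkt _ _ ed2b t; simpa only [mul_assoc] using this
  -- fd1 : Cg*(D*(C*Cg)) = Cg*D
  have fd1b : Cg*(D*(C*Cg)) = Cg*D := by
    have t1 := congrArg (fun z => Cg * z) f2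
    simp only [mul_add, mul_neg, neg_mul, mul_assoc, r12] at t1
    rw [neg_add_cancel] at t1
    have t2 : Cg*(Cg*D) = Cg*(Cg*(D*(Cg*C))) := by
      have := add_neg_eq_zero.mp t1.symm
      exact this
    have t3 := congrArg (fun z => C * z) t2
    simp only [r16] at t3
    rw [← hc3] at t3
    exact t3.symm
  have r21' : ∀ t, Cg*(D*(C*(Cg*t))) = Cg*(D*t) := fun t => by
    have := mkt _ _ fd1b t; simpa only [mul_assoc] using this
  have fd2b : C*(Cg*(D*Cg)) = D*Cg := by
    have t1 := congrArg (fun z => z * Cg) f2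
    simp only [add_mul, neg_mul, mul_neg, mul_assoc, hc2'] at t1
    rw [add_neg_cancel] at t1
    have t2 : D*(Cg*Cg) = C*(Cg*(D*(Cg*Cg))) := by
      have := neg_add_eq_zero.mp t1
      exact this.symm
    have t3 := congrArg (fun z => z * C) t2
    simp only [mul_assoc] at t3
    rw [b18] at t3
    exact t3.symm
  have r22' : ∀ t, C*(Cg*(D*(Cg*t))) = D*(Cg*t) := fun t => by
    have := mkt _ _ fd2b t; simpa only [mul_assoc] using this
  
  -- H := A*(A*Ag) is the group inverse of Ag
  have hpH : Ag*(A*(A*Ag)) = A*Ag := by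
    calc Ag*(A*(A*Ag)) = ((Ag*A)*A)*Ag := by noncomm_ring
      _ = ((A*Ag)*A)*Ag := by rw [← ha3]
      _ = A*Ag := by rw [ha1]
  have hpH2 : (A*(A*Ag))*Ag = A*Ag := by
    have : (A*(A*Ag))*Ag = A*(A*(Ag*Ag)) := by noncomm_ring
    rw [this, r13]
  have gg3 : Ag*(A*(A*Ag)) = (A*(A*Ag))*Ag := hpH.trans hpH2.symm
  have gg1 : Ag*(A*(A*Ag))*Ag = Ag := by
    rw [hpH, mul_assoc, b14]
  have gg2 : (A*(A*Ag))*Ag*(A*(A*Ag)) = A*(A*Ag) := by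
    rw [hpH2]
    calc (A*Ag)*(A*(A*Ag)) = ((A*Ag)*A)*(A*Ag) := by noncomm_ring
      _ = A*(A*Ag) := by rw [ha1]
  have hdH : D*(A*(A*Ag)) = (A*(A*Ag))*D :=
    gi_comm Ag (A*(A*Ag)) D gg1 gg2 gg3 h3.symm
  have hdp0' : D*(A*Ag) = A*(Ag*D) := by
    calc D*(A*Ag) = D*(Ag*(A*(A*Ag))) := by rw [hpH]
      _ = (D*Ag)*(A*(A*Ag)) := by noncomm_ring
      _ = (Ag*D)*(A*(A*Ag)) := by rw [h3]
      _ = Ag*(D*(A*(A*Ag))) := by noncomm_ring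
      _ = Ag*((A*(A*Ag))*D) := by rw [hdH]
      _ = (Ag*(A*(A*Ag)))*D := by noncomm_ring
      _ = (A*Ag)*D := by rw [hpH]
      _ = A*(Ag*D) := by noncomm_ring
  have r23 : ∀ t, D*(A*(Ag*t)) = A*(Ag*(D*t)) := fun t => by
    have := mkt _ _ hdp0' t; simpa only [mul_assoc] using this
  -- K := C*(C*Cg) is the group inverse of Cg
  have hpK : Cg*(C*(C*Cg)) = C*Cg := by
    calc Cg*(C*(C*Cg)) = ((Cg*C)*C)*Cg := by noncomm_ring
      _ = ((C*Cg)*C)*Cg := by rw [← hc3]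
      _ = C*Cg := by rw [hc1]
  have hpK2 : (C*(C*Cg))*Cg = C*Cg := by
    have : (C*(C*Cg))*Cg = C*(C*(Cg*Cg)) := by noncomm_ring
    rw [this, r15]
  have kk3 : Cg*(C*(C*Cg)) = (C*(C*Cg))*Cg := hpK.trans hpK2.symm
  have kk1 : Cg*(C*(C*Cg))*Cg = Cg := by
    rw [hpK, mul_assoc, b16]
  have kk2 : (C*(C*Cg))*Cg*(C*(C*Cg)) = C*(C*Cg) := by
    rw [hpK2]
    calc (C*Cg)*(C*(C*Cg)) = ((C*Cg)*C)*(C*Cg) := by noncomm_ring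
      _ = C*(C*Cg) := by rw [hc1]
  have hbK : B*(C*(C*Cg)) = (C*(C*Cg))*B :=
    gi_comm Cg (C*(C*Cg)) B kk1 kk2 kk3 h2.symm
  have hbq0' : B*(C*Cg) = C*(Cg*B) := by
    calc B*(C*Cg) = B*(Cg*(C*(C*Cg))) := by rw [hpK]
      _ = (B*Cg)*(C*(C*Cg)) := by noncomm_ring
      _ = (Cg*B)*(C*(C*Cg)) := by rw [h2]
      _ = Cg*(B*(C*(C*Cg))) := by noncomm_ring
      _ = Cg*((C*(C*Cg))*B) := by rw [hbK]
      _ = (Cg*(C*(C*Cg)))*B := by noncomm_ring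
      _ = (C*Cg)*B := by rw [hpK]
      _ = C*(Cg*B) := by noncomm_ring
  have r24 : ∀ t, B*(C*(Cg*t)) = C*(Cg*(B*t)) := fun t => by
    have := mkt _ _ hbq0' t; simpa only [mul_assoc] using this
  -- D commutes with C*Cg (from fd lemmas)
  have qd_qdq : (C*Cg)*D = ((C*Cg)*D)*(C*Cg) := by
    calc (C*Cg)*D = C*(Cg*D) := by noncomm_ring
      _ = C*(Cg*(D*(C*Cg))) := by rw [fd1b]
      _ = ((C*Cg)*D)*(C*Cg) := by noncomm_ring
  have dq_qdq : D*(C*Cg) = ((C*Cg)*D)*(C*Cg) := by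
    calc D*(C*Cg) = D*(Cg*C) := by rw [hc3]
      _ = (D*Cg)*C := by noncomm_ring
      _ = (C*(Cg*(D*Cg)))*C := by rw [fd2b]
      _ = ((C*Cg)*D)*(Cg*C) := by noncomm_ring
      _ = ((C*Cg)*D)*(C*Cg) := by rw [← hc3]
  have hdq0' : D*(C*Cg) = C*(Cg*D) := by
    rw [dq_qdq, ← qd_qdq]; noncomm_ring
  have r25 : ∀ t, D*(C*(Cg*t)) = C*(Cg*(D*t)) := fun t => by
    have := mkt _ _ hdq0' t; simpa only [mul_assoc] using this
  -- B commutes with A*Ag (from ed lemmas)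
  have pb_pbp : (A*Ag)*B = ((A*Ag)*B)*(A*Ag) := by
    calc (A*Ag)*B = A*(Ag*B) := by noncomm_ring
      _ = A*(Ag*(B*(A*Ag))) := by rw [ed1b]
      _ = ((A*Ag)*B)*(A*Ag) := by noncomm_ring
  have bp_pbp : B*(A*Ag) = ((A*Ag)*B)*(A*Ag) := by
    calc B*(A*Ag) = B*(Ag*A) := by rw [ha3]
      _ = (B*Ag)*A := by noncomm_ring
      _ = (A*(Ag*(B*Ag)))*A := by rw [ed2b]
      _ = ((A*Ag)*B)*(Ag*A) := by noncomm_ring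
      _ = ((A*Ag)*B)*(A*Ag) := by rw [← ha3]
  have hbp0' : B*(A*Ag) = A*(Ag*B) := by
    rw [bp_pbp, ← pb_pbp]; noncomm_ring
  have r26 : ∀ t, B*(A*(Ag*t)) = A*(Ag*(B*t)) := fun t => by
    have := mkt _ _ hbp0' t; simpa only [mul_assoc] using this
  -- bridge
  have s11 : ∀ t, C*(B*(Ag*(Cg*t))) = B*(Ag*(C*(Cg*t))) := fun t => by
    rw [← r4, ← r5, ← r24, r4, r3]
  have s11b : C*(B*(Ag*Cg)) = B*(Ag*(C*Cg)) := by
    rw [haggc, ← r5, ← r24, ← haggc, r3]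
  have s12b : C*(C*(B*Cg)) = C*B := by
    rw [← h2, r15]
  have s12 : ∀ t, C*(C*(B*(Cg*t))) = C*(B*t) := fun t => by
    rw [← r5, r15]
  have s13b : A*(Ag*(C*B)) = A*(Ag*(B*C)) := by
    have e1 : A*(Ag*(C*(Cg*(B*C)))) = A*(Ag*(B*C)) := by
      rw [← r24, hc1']
    have e2 : A*(Ag*(C*(Cg*(B*C)))) = A*(Ag*(C*B)) := by
      rw [r5, ← hc3, hbq0', r15]
    rw [← e2, e1]
  have s13 : ∀ t, A*(Ag*(C*(B*t))) = A*(Ag*(B*(C*t))) := fun t => by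
    have := mkt _ _ s13b t; simpa only [mul_assoc] using this
  have br3b : Ag*(Cg*(D*A)) = A*(Ag*(Cg*D)) := by
    rw [← r4, ← r6, ← ha3, hdp0', r2, r4]
  have br3 : ∀ t, Ag*(Cg*(D*(A*t))) = A*(Ag*(Cg*(D*t))) := fun t => by
    rw [← r4, ← r6, r7, r23, r2, r4]
  -- ==== main identities ====
  have Tii : (A*C)*(Ag*Cg)*(A*C) = A*C := by
    simp only [mul_add, add_mul, mul_neg, neg_mul, mul_assoc]
    simp only [r1,r2,r3,r4,r5,r6,r7,r8,r9,r10,r11,r12,r13,r14,r15,r16,r17',r18',r19',r20',r21',r22',r23,r24,r25,r26,s11,s11b, ← h1, ← hacg, hagc, ← haggc, h2, ← h3, ← ha3, ← hc3, ha1', ha2', hc1', hc2', b13, b14, b15, b16, b17, b18, ed1b, ed2b, fd1b, fd2b, hdp0', hbq0', hdq0', hbp0', s12, s12b, s13, s13b, br3, br3b]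
  have Tr2b : (Ag*Cg)*(A*C)*(Ag*Cg) = Ag*Cg := by
    simp only [mul_add, add_mul, mul_neg, neg_mul, mul_assoc]
    simp only [r1,r2,r3,r4,r5,r6,r7,r8,r9,r10,r11,r12,r13,r14,r15,r16,r17',r18',r19',r20',r21',r22',r23,r24,r25,r26,s11,s11b, ← h1, ← hacg, hagc, ← haggc, h2, ← h3, ← ha3, ← hc3, ha1', ha2', hc1', hc2', b13, b14, b15, b16, b17, b18, ed1b, ed2b, fd1b, fd2b, hdp0', hbq0', hdq0', hbp0', s12, s12b, s13, s13b, br3, br3b]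
  have Tr2c : (A*C)*(Ag*Cg) = (Ag*Cg)*(A*C) := by
    simp only [mul_add, add_mul, mul_neg, neg_mul, mul_assoc]
    simp only [r1,r2,r3,r4,r5,r6,r7,r8,r9,r10,r11,r12,r13,r14,r15,r16,r17',r18',r19',r20',r21',r22',r23,r24,r25,r26,s11,s11b, ← h1, ← hacg, hagc, ← haggc, h2, ← h3, ← ha3, ← hc3, ha1', ha2', hc1', hc2', b13, b14, b15, b16, b17, b18, ed1b, ed2b, fd1b, fd2b, hdp0', hbq0', hdq0', hbp0', s12, s12b, s13, s13b, br3, br3b]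
  have FEE : ((A*C)*(Ag*Cg))*((A*C)*(Ag*Cg)) = (A*C)*(Ag*Cg) := by
    simp only [mul_add, add_mul, mul_neg, neg_mul, mul_assoc]
    simp only [r1,r2,r3,r4,r5,r6,r7,r8,r9,r10,r11,r12,r13,r14,r15,r16,r17',r18',r19',r20',r21',r22',r23,r24,r25,r26,s11,s11b, ← h1, ← hacg, hagc, ← haggc, h2, ← h3, ← ha3, ← hc3, ha1', ha2', hc1', hc2', b13, b14, b15, b16, b17, b18, ed1b, ed2b, fd1b, fd2b, hdp0', hbq0', hdq0', hbp0', s12, s12b, s13, s13b, br3, br3b]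
  have HT1E : (A*D+B*C)*((A*C)*(Ag*Cg)) =
      ((A*C)*(Ag*Cg))*((A*D+B*C)*((A*C)*(Ag*Cg))) := by
    simp only [mul_add, add_mul, mul_neg, neg_mul, mul_assoc]
    simp only [r1,r2,r3,r4,r5,r6,r7,r8,r9,r10,r11,r12,r13,r14,r15,r16,r17',r18',r19',r20',r21',r22',r23,r24,r25,r26,s11,s11b, ← h1, ← hacg, hagc, ← haggc, h2, ← h3, ← ha3, ← hc3, ha1', ha2', hc1', hc2', b13, b14, b15, b16, b17, b18, ed1b, ed2b, fd1b, fd2b, hdp0', hbq0', hdq0', hbp0', s12, s12b, s13, s13b, br3, br3b]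
  have Hbr : (A*C)*(Ag * -(Cg*D*Cg) + -(Ag*B*Ag)*Cg) + (A*D+B*C)*(Ag*Cg) = 0 := by
    simp only [mul_add, add_mul, mul_neg, neg_mul, mul_assoc]
    simp only [r1,r2,r3,r4,r5,r6,r7,r8,r9,r10,r11,r12,r13,r14,r15,r16,r17',r18',r19',r20',r21',r22',r23,r24,r25,r26,s11,s11b, ← h1, ← hacg, hagc, ← haggc, h2, ← h3, ← ha3, ← hc3, ha1', ha2', hc1', hc2', b13, b14, b15, b16, b17, b18, ed1b, ed2b, fd1b, fd2b, hdp0', hbq0', hdq0', hbp0', s12, s12b, s13, s13b, br3, br3b]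
    abel
  have Hbr2 : (Ag*Cg)*(A*D+B*C) + (Ag * -(Cg*D*Cg) + -(Ag*B*Ag)*Cg)*(A*C) = 0 := by
    simp only [mul_add, add_mul, mul_neg, neg_mul, mul_assoc]
    simp only [r1,r2,r3,r4,r5,r6,r7,r8,r9,r10,r11,r12,r13,r14,r15,r16,r17',r18',r19',r20',r21',r22',r23,r24,r25,r26,s11,s11b, ← h1, ← hacg, hagc, ← haggc, h2, ← h3, ← ha3, ← hc3, ha1', ha2', hc1', hc2', b13, b14, b15, b16, b17, b18, ed1b, ed2b, fd1b, fd2b, hdp0', hbq0', hdq0', hbp0', s12, s12b, s13, s13b, br3, br3b]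
    abel
  have HGE : ((Ag*Cg)*(A*C))*(Ag * -(Cg*D*Cg) + -(Ag*B*Ag)*Cg) =
      Ag * -(Cg*D*Cg) + -(Ag*B*Ag)*Cg := by
    simp only [mul_add, add_mul, mul_neg, neg_mul, mul_assoc]
    simp only [r1,r2,r3,r4,r5,r6,r7,r8,r9,r10,r11,r12,r13,r14,r15,r16,r17',r18',r19',r20',r21',r22',r23,r24,r25,r26,s11,s11b, ← h1, ← hacg, hagc, ← haggc, h2, ← h3, ← ha3, ← hc3, ha1', ha2', hc1', hc2', b13, b14, b15, b16, b17, b18, ed1b, ed2b, fd1b, fd2b, hdp0', hbq0', hdq0', hbp0', s12, s12b, s13, s13b, br3, br3b]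
  have Gv : Ag * -(Cg*D*Cg) + -(Ag*B*Ag)*Cg = Cg * -(Ag*B*Ag) + -(Cg*D*Cg)*Ag := by
    simp only [mul_add, add_mul, mul_neg, neg_mul, mul_assoc]
    simp only [r1,r2,r3,r4,r5,r6,r7,r8,r9,r10,r11,r12,r13,r14,r15,r16,r17',r18',r19',r20',r21',r22',r23,r24,r25,r26,s11,s11b, ← h1, ← hacg, hagc, ← haggc, h2, ← h3, ← ha3, ← hc3, ha1', ha2', hc1', hc2', b13, b14, b15, b16, b17, b18, ed1b, ed2b, fd1b, fd2b, hdp0', hbq0', hdq0', hbp0', s12, s12b, s13, s13b, br3, br3b]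
    abel
  -- process hex : obtain HES via uniqueness of the group inverse
  obtain ⟨Z, hZ⟩ := hex
  rw [dmat_mul] at hZ
  obtain ⟨Z0, Z1, hZ⟩ : ∃ Z0 Z1, IsDrazin 1 (dmat (A*C) (A*D+B*C)) (dmat Z0 Z1) :=
    ⟨_, _, by rw [← dmat_decomp Z]; exact hZ⟩
  obtain ⟨hz1, hz2, hz3⟩ := hZ
  rw [pow_one, dmat_mul, dmat_mul, dmat_eq_iff] at hz1
  rw [dmat_mul, dmat_mul, dmat_eq_iff] at hz2
  rw [dmat_mul, dmat_mul, dmat_eq_iff] at hz3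
  obtain ⟨hz1r, hz1d⟩ := hz1
  have hz0G : Z0 = Ag*Cg :=
    gi_unique (A*C) Z0 (Ag*Cg) hz1r hz2.1 hz3.1 Tii Tr2b Tr2c
  rw [hz0G, add_mul] at hz1d
  rw [show ((A*D+B*C)*(Ag*Cg))*(A*C) = (A*D+B*C)*((A*C)*(Ag*Cg)) from by
    rw [mul_assoc, ← Tr2c]] at hz1d
  have key2 := congrArg (fun X => ((A*C)*(Ag*Cg)) * X) hz1d
  rw [mul_add ((A*C)*(Ag*Cg)) (((A*C)*(Ag*Cg))*(A*D+B*C))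
      (((A*C)*Z1)*(A*C) + (A*D+B*C)*((A*C)*(Ag*Cg))),
    mul_add ((A*C)*(Ag*Cg)) (((A*C)*Z1)*(A*C))
      ((A*D+B*C)*((A*C)*(Ag*Cg)))] at key2
  have c1 : ((A*C)*(Ag*Cg))*(((A*C)*(Ag*Cg))*(A*D+B*C)) =
      ((A*C)*(Ag*Cg))*(A*D+B*C) := by
    rw [← mul_assoc, FEE]
  have c2 : ((A*C)*(Ag*Cg))*(((A*C)*Z1)*(A*C)) = ((A*C)*Z1)*(A*C) := by
    calc ((A*C)*(Ag*Cg))*(((A*C)*Z1)*(A*C))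
        = (((A*C)*(Ag*Cg))*(A*C))*(Z1*(A*C)) := by noncomm_ring
      _ = (A*C)*(Z1*(A*C)) := by rw [Tii]
      _ = ((A*C)*Z1)*(A*C) := by noncomm_ring
  have c3 : ((A*C)*(Ag*Cg))*((A*D+B*C)*((A*C)*(Ag*Cg))) =
      (A*D+B*C)*((A*C)*(Ag*Cg)) := HT1E.symm
  rw [c1, c2, c3] at key2
  have hcanc : ((A*C)*Z1)*(A*C) + (A*D+B*C)*((A*C)*(Ag*Cg)) = 0 :=
    add_eq_left.mp key2
  rw [hcanc, add_zero] at hz1d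
  -- hz1d : ((A*C)*(Ag*Cg))*(A*D+B*C) = A*D+B*C
  -- ==== assembly ====
  refine ⟨⟨?_, ?_, ?_⟩, ?_⟩
  · simp only [pow_one, dmat_mul]
    rw [dmat_eq_iff]
    exact ⟨Tii, by rw [Hbr, zero_mul, add_zero]; exact hz1d⟩
  · simp only [dmat_mul]
    rw [dmat_eq_iff]
    exact ⟨Tr2b, by rw [Hbr2, zero_mul, add_zero]; exact HGE⟩
  · simp only [dmat_mul]
    rw [dmat_eq_iff]
    exact ⟨Tr2c, by rw [Hbr, Hbr2]⟩
  · simp only [dmat_mul]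
    rw [dmat_eq_iff]
    exact ⟨haggc, Gv⟩
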